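/- For every integer m ≥ 1, the Sylvester sum satisfies m·S_{m−1} = a^{m−1}·∑_{n ∈ N₀} B_m(n/a) − B_m, where B_m(x) is the m-th Bernoulli polynomial and B_m = B_m(0). -/

import Mathlib

section RaabeAux

open Polynomial Finset

private lemma periodic_eq_const {P : ℚ[X]} (h : ∀ x : ℚ, P.eval (x + 1) = P.eval x) :
    P = Polynomial.C (P.eval 0) := by
  have hroot : ∀ n : ℕ, P.eval (n : ℚ) = P.eval 0 := by
    intro n
    induction n with
    | zero => simp
    | succ n ih => push_cast; rw [h]; exact ih
  have hz : P - Polynomial.C (P.eval 0) = 0 := by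
    apply Polynomial.eq_zero_of_infinite_isRoot
    apply Set.Infinite.mono (s := Set.range ((↑) : ℕ → ℚ))
    · rintro x ⟨n, rfl⟩
      simp [Polynomial.IsRoot, hroot n]
    · exact Set.infinite_range_of_injective Nat.cast_injective
  linear_combination (norm := ring_nf) hz

private noncomputable def raabeQ (A m : ℕ) : ℚ[X] :=
  (A:ℚ)^m • ∑ r ∈ Finset.range A, (Polynomial.bernoulli m).comp
      (Polynomial.C ((A:ℚ)⁻¹) * (Polynomial.X + Polynomial.C (r:ℚ)))
    - (A:ℚ) • Polynomial.bernoulli m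

private lemma raabeQ_eval (A m : ℕ) (x : ℚ) :
    (raabeQ A m).eval x =
      (A:ℚ)^m * ∑ r ∈ Finset.range A, (Polynomial.bernoulli m).eval ((A:ℚ)⁻¹ * (x + r))
        - (A:ℚ) * (Polynomial.bernoulli m).eval x := by
  simp [raabeQ, eval_finset_sum]

private lemma raabeQ_periodic (A : ℕ) (hA : 0 < A) (m : ℕ) (x : ℚ) :
    (raabeQ A m).eval (x + 1) = (raabeQ A m).eval x := by
  have hAQ : (A:ℚ) ≠ 0 := Nat.cast_ne_zero.mpr hA.ne'
  rw [raabeQ_eval, raabeQ_eval]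
  have h1 : ∑ r ∈ Finset.range A, (Polynomial.bernoulli m).eval ((A:ℚ)⁻¹ * (x + 1 + r))
      = ∑ r ∈ Finset.range A, (Polynomial.bernoulli m).eval ((A:ℚ)⁻¹ * (x + (r+1))) := by
    apply Finset.sum_congr rfl; intro r _; ring_nf
  have h2 : ∑ r ∈ Finset.range A, (Polynomial.bernoulli m).eval ((A:ℚ)⁻¹ * (x + ((r:ℚ)+1)))
      = ∑ r ∈ Finset.range A, (Polynomial.bernoulli m).eval ((A:ℚ)⁻¹ * (x + r))
        + (Polynomial.bernoulli m).eval ((A:ℚ)⁻¹ * (x + A))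
        - (Polynomial.bernoulli m).eval ((A:ℚ)⁻¹ * (x + 0)) := by
    have := Finset.sum_range_succ' (fun r : ℕ => (Polynomial.bernoulli m).eval ((A:ℚ)⁻¹ * (x + r))) A
    have h3 := Finset.sum_range_succ (fun r : ℕ => (Polynomial.bernoulli m).eval ((A:ℚ)⁻¹ * (x + r))) A
    push_cast at this h3 ⊢
    linarith [this, h3]
  have hshift : (A:ℚ)⁻¹ * (x + A) = 1 + (A:ℚ)⁻¹ * x := by field_simp; ring
  have hb1 := Polynomial.bernoulli_eval_one_add m ((A:ℚ)⁻¹ * x)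
  have hb2 : (Polynomial.bernoulli m).eval (x + 1) = (Polynomial.bernoulli m).eval x + m * x ^ (m-1) := by
    have := Polynomial.bernoulli_eval_one_add m x
    rw [add_comm x 1]; exact this
  have hkey : (A:ℚ)^m * ((m:ℚ) * ((A:ℚ)⁻¹ * x) ^ (m-1)) = (A:ℚ) * ((m:ℚ) * x ^ (m-1)) := by
    cases m with
    | zero => simp
    | succ p =>
      simp only [Nat.add_sub_cancel, mul_pow, pow_succ]
      field_simp
      ring_nf; rw [← mul_pow, mul_inv_cancel₀ hAQ, one_pow, one_mul]
  rw [h1]; push_cast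
  rw [h2, hshift, hb1, hb2]
  ring_nf
  ring_nf at hkey
  linarith [hkey]

private lemma raabeQ_deriv (A : ℕ) (hA : 0 < A) (m : ℕ) :
    Polynomial.derivative (raabeQ A (m+1)) = ((m:ℚ)+1) • raabeQ A m := by
  have hAQ : (A:ℚ) ≠ 0 := Nat.cast_ne_zero.mpr hA.ne'
  simp only [raabeQ, derivative_sub, derivative_smul, derivative_sum, derivative_comp,
    derivative_bernoulli_add_one, derivative_mul, derivative_C, derivative_X, derivative_add,
    zero_mul, mul_one, add_zero, zero_add, mul_comp, natCast_comp, add_comp, C_comp, one_comp, smul_sub,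
    Polynomial.smul_eq_C_mul, Finset.mul_sum]
  refine congrArg₂ (· - ·) ?_ ?_
  · apply Finset.sum_congr rfl
    intro r _
    have hC : (Polynomial.C ((A:ℚ)^(m+1)) : ℚ[X]) * Polynomial.C ((A:ℚ)⁻¹)
        = Polynomial.C ((A:ℚ)^m) := by
      rw [← C_mul]; congr 1; field_simp [pow_succ]; ring
    have hm1 : ((m : ℚ[X]) + 1) = Polynomial.C ((m:ℚ)+1) := by
      rw [C_add, C_1, C_eq_natCast]
    rw [hm1, ← hC]
    ring
  · simp only [C_add, C_1, C_eq_natCast]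
    ring

private lemma raabeQ_eq_zero (A : ℕ) (hA : 0 < A) (m : ℕ) : raabeQ A m = 0 := by
  have h1 := periodic_eq_const (raabeQ_periodic A hA (m+1))
  have h2 := raabeQ_deriv A hA m
  rw [h1, derivative_C] at h2
  have hne : ((m:ℚ)+1) ≠ 0 := by positivity
  rcases smul_eq_zero.mp h2.symm with h | h
  · exact absurd h hne
  · exact h

private lemma raabe_eval (A : ℕ) (hA : 0 < A) (m : ℕ) :
    (A:ℚ)^m * ∑ r ∈ Finset.range A, (Polynomial.bernoulli m).eval ((r:ℚ)/(A:ℚ))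
      = (A:ℚ) * _root_.bernoulli m := by
  have h := raabeQ_eval A m 0
  rw [raabeQ_eq_zero A hA m, eval_zero] at h
  have hdiv : ∀ r : ℕ, (A:ℚ)⁻¹ * (0 + r) = (r:ℚ) / A := by
    intro r; rw [zero_add, inv_mul_eq_div]
  simp only [hdiv, Polynomial.bernoulli_eval_zero] at h
  linarith

private lemma bernoulli_telescope (p : ℕ) (x : ℚ) (F : ℕ) :
    ((p:ℚ)+1) * ∑ j ∈ Finset.range F, (x + j)^p
      = (Polynomial.bernoulli (p+1)).eval (x + F) - (Polynomial.bernoulli (p+1)).eval x := by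
  induction F with
  | zero => simp
  | succ F ih =>
    rw [Finset.sum_range_succ, mul_add, ih]
    have hx : x + ((F:ℚ)+1) = 1 + (x + F) := by ring
    push_cast
    rw [hx, Polynomial.bernoulli_eval_one_add]
    push_cast
    ring

end RaabeAux

/-- Equation (3.1.3): for `m ≥ 1`,
`m·S_{m−1} = a^{m−1}·∑_{n ∈ N₀} B_m(n/a) − B_m`,
where `B_m` is the `m`-th Bernoulli polynomial (with `B₁ = −1/2`),
`N₀ = N ∪ {0}`, and `S_{m-1} = ∑_{n ∈ NR} n^{m-1}`. -/
theorem sylvester_sum_bernoulli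
    (k : ℕ) (a : Fin k → ℕ) (ha : ∀ i, 0 < a i)
    (hgcd : Finset.univ.gcd a = 1)
    (A : ℕ) (hA : 2 ≤ A) (hAmem : ∃ i, a i = A)
    (NR N : Finset ℕ)
    (hNR : ∀ n : ℕ, n ∈ NR ↔ 0 < n ∧ ¬ ∃ x : Fin k → ℕ, n = ∑ i, a i * x i)
    (hN : ∀ n : ℕ, n ∈ N ↔ 0 < n ∧ (∃ x : Fin k → ℕ, n = ∑ i, a i * x i) ∧
      ¬ ∃ x : Fin k → ℕ, (n : ℤ) - (A : ℤ) = ∑ i, (a i : ℤ) * (x i : ℤ))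
    (m : ℕ) (hm : 1 ≤ m) :
    (m : ℚ) * ∑ n ∈ NR, (n : ℚ) ^ (m - 1) =
      (A : ℚ) ^ (m - 1) *
        ∑ n ∈ insert 0 N, (Polynomial.bernoulli m).eval ((n : ℚ) / (A : ℚ))
      - bernoulli m := by
  classical
  obtain ⟨p, rfl⟩ : ∃ p, m = p + 1 := ⟨m - 1, by omega⟩
  have hA0 : 0 < A := by omega
  have hAQ : (A:ℚ) ≠ 0 := Nat.cast_ne_zero.mpr hA0.ne'
  obtain ⟨i0, hi0⟩ := hAmem
  set Rep : ℕ → Prop := fun n => ∃ x : Fin k → ℕ, n = ∑ i, a i * x i with hRepDef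
  have hNR' : ∀ n, n ∈ NR ↔ 0 < n ∧ ¬ Rep n := hNR
  have hN' : ∀ n, n ∈ N ↔ 0 < n ∧ Rep n ∧
      ¬ ∃ x : Fin k → ℕ, (n : ℤ) - (A : ℤ) = ∑ i, (a i : ℤ) * (x i : ℤ) := hN
  have hRep0 : Rep 0 := ⟨fun _ => 0, by simp⟩
  have hRepA : Rep A := by
    refine ⟨fun j => if j = i0 then 1 else 0, ?_⟩
    rw [Finset.sum_eq_single i0]
    · simp [hi0]
    · intro b _ hb; simp [hb]
    · intro h; exact absurd (Finset.mem_univ i0) h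
  have hRepAdd : ∀ {u v : ℕ}, Rep u → Rep v → Rep (u + v) := by
    rintro u v ⟨x, rfl⟩ ⟨y, rfl⟩
    refine ⟨fun i => x i + y i, ?_⟩
    rw [← Finset.sum_add_distrib]
    exact Finset.sum_congr rfl fun i _ => by ring
  have hRepMul : ∀ (u j : ℕ), Rep u → Rep (u + A * j) := by
    intro u j hu
    induction j with
    | zero => simpa
    | succ j ih =>
      have h := hRepAdd ih hRepA
      have he : u + A * j + A = u + A * (j+1) := by ring
      rwa [he] at h
  set Bd : ℕ := NR.sup id + 1 with hBdDef
  have hBd : ∀ n, Bd ≤ n → Rep n := by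
    intro n hn
    by_contra hrep
    have hmem : n ∈ NR := (hNR' n).mpr ⟨by omega, hrep⟩
    have := Finset.le_sup (f := id) hmem
    simp only [id] at this
    omega
  have exQ : ∀ r : ℕ, ∃ n, Rep n ∧ n % A = r % A := by
    intro r
    refine ⟨r % A + A * Bd, hBd _ ?_, ?_⟩
    · have h1 : Bd ≤ A * Bd := Nat.le_mul_of_pos_left Bd hA0
      omega
    · rw [Nat.add_mul_mod_self_left, Nat.mod_mod_of_dvd _ dvd_rfl]
  set t : ℕ → ℕ := fun r => Nat.find (exQ r) with htDef
  have ht_rep : ∀ r, Rep (t r) := fun r => (Nat.find_spec (exQ r)).1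
  have ht_mod : ∀ r, t r % A = r % A := fun r => (Nat.find_spec (exQ r)).2
  have ht_min : ∀ r n, Rep n → n % A = r % A → t r ≤ n := fun r n h1 h2 => Nat.find_le ⟨h1, h2⟩
  have hmodmod : ∀ x : ℕ, x % A % A = x % A := fun x => Nat.mod_mod_of_dvd x dvd_rfl
  have hRepIff : ∀ n, Rep n ↔ t (n % A) ≤ n := by
    intro n
    constructor
    · intro h; exact ht_min _ n h (hmodmod n).symm
    · intro hle
      have h1 : t (n % A) % A = n % A := by rw [ht_mod, hmodmod]
      obtain ⟨j, hj⟩ := (Nat.modEq_iff_dvd' hle).mp h1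
      have hrep := hRepMul (t (n % A)) j (ht_rep _)
      have hn : n = t (n % A) + A * j := by omega
      rwa [← hn] at hrep
  have ht0 : t 0 = 0 := Nat.le_zero.mp (ht_min 0 0 hRep0 rfl)
  have ht_ge : ∀ r, r < A → r ≤ t r := by
    intro r hr
    have h := ht_mod r
    rw [Nat.mod_eq_of_lt hr] at h
    calc r = t r % A := h.symm
    _ ≤ t r := Nat.mod_le _ _
  set f : ℕ → ℕ := fun r => (t r - r) / A with hfDef
  have ht_eq : ∀ r, r < A → t r = r + A * f r := by
    intro r hr
    have h1 : t r % A = r := by rw [ht_mod, Nat.mod_eq_of_lt hr]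
    have h2 : A ∣ t r - r := (Nat.modEq_iff_dvd' (ht_ge r hr)).mp
      (by show r % A = t r % A; rw [h1, Nat.mod_eq_of_lt hr])
    calc t r = r + (t r - r) := by have := ht_ge r hr; omega
    _ = r + A * ((t r - r) / A) := by rw [Nat.mul_div_cancel' h2]
  have hf0 : f 0 = 0 := by
    have h := ht_eq 0 hA0
    rw [ht0, zero_add] at h
    exact (Nat.mul_eq_zero.mp h.symm).resolve_left hA0.ne'
  have hNRiff : ∀ n, n ∈ NR ↔ 0 < n ∧ n < t (n % A) := by
    intro n
    rw [hNR' n]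
    constructor
    · rintro ⟨h1, h2⟩
      refine ⟨h1, ?_⟩
      by_contra hle
      exact h2 ((hRepIff n).mpr (by omega))
    · rintro ⟨h1, h2⟩
      exact ⟨h1, fun hrep => by have := (hRepIff n).mp hrep; omega⟩
  have hint : ∀ n : ℕ, (∃ x : Fin k → ℕ, (n:ℤ) - (A:ℤ) = ∑ i, (a i:ℤ) * (x i:ℤ))
      ↔ (A ≤ n ∧ Rep (n - A)) := by
    intro n
    constructor
    · rintro ⟨x, hx⟩
      have hnn : (0:ℤ) ≤ (n:ℤ) - A := by
        rw [hx]
        exact Finset.sum_nonneg fun i _ => by positivity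
      have hAn : A ≤ n := by exact_mod_cast sub_nonneg.mp hnn
      refine ⟨hAn, x, ?_⟩
      have h : ((n - A : ℕ) : ℤ) = ∑ i, (a i:ℤ) * (x i:ℤ) := by
        rw [Nat.cast_sub hAn]; exact hx
      exact_mod_cast h
    · rintro ⟨hAn, x, hx⟩
      refine ⟨x, ?_⟩
      rw [← Nat.cast_sub hAn]
      exact_mod_cast congrArg (Nat.cast : ℕ → ℤ) hx
  have hsubmod : ∀ n : ℕ, A ≤ n → (n - A) % A = n % A := by
    intro n hAn
    have h5 : n - A + A = n := by omega
    conv_rhs => rw [← h5]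
    rw [Nat.add_mod_right]
  have hN0 : ∀ n, n ∈ insert 0 N ↔ n = t (n % A) := by
    intro n
    rcases Nat.eq_zero_or_pos n with rfl | hn
    · simp [Nat.zero_mod, ht0]
    · rw [Finset.mem_insert]
      simp only [hn.ne', false_or]
      rw [hN' n, hint n]
      constructor
      · rintro ⟨-, hrep, hnot⟩
        have hle : t (n % A) ≤ n := (hRepIff n).mp hrep
        rcases lt_or_eq_of_le hle with hlt | heq
        · exfalso
          have h1 : t (n % A) % A = n % A := by rw [ht_mod, hmodmod]
          obtain ⟨j, hj⟩ := (Nat.modEq_iff_dvd' hle).mp h1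
          have hj1 : 1 ≤ j := by
            rcases Nat.eq_zero_or_pos j with rfl | h
            · omega
            · exact h
          have hAj : A ≤ A * j := Nat.le_mul_of_pos_right A hj1
          have hAn : A ≤ n := by omega
          apply hnot
          refine ⟨hAn, ?_⟩
          rw [hRepIff, hsubmod n hAn]
          omega
        · exact heq.symm
      · intro heq
        refine ⟨hn, ?_, ?_⟩
        · rw [heq]; exact ht_rep _
        · rintro ⟨hAn, hrepnA⟩
          have h := (hRepIff (n - A)).mp hrepnA
          rw [hsubmod n hAn] at h
          omega
  -- sums
  have hN0img : insert 0 N = (Finset.range A).image t := by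
    ext n
    rw [hN0, Finset.mem_image]
    constructor
    · intro h
      exact ⟨n % A, Finset.mem_range.mpr (Nat.mod_lt n hA0), h.symm⟩
    · rintro ⟨r, hr, rfl⟩
      have h : t r % A = r := by rw [ht_mod, Nat.mod_eq_of_lt (Finset.mem_range.mp hr)]
      rw [h]
  have hN0sum : ∑ n ∈ insert 0 N, (Polynomial.bernoulli (p+1)).eval ((n:ℚ)/A)
      = ∑ r ∈ Finset.range A, (Polynomial.bernoulli (p+1)).eval ((t r:ℚ)/A) := by
    rw [hN0img, Finset.sum_image]
    intro r hr s hs h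
    have h1 : t r % A = r := by rw [ht_mod, Nat.mod_eq_of_lt (Finset.mem_range.mp hr)]
    have h2 : t s % A = s := by rw [ht_mod, Nat.mod_eq_of_lt (Finset.mem_range.mp hs)]
    rw [← h1, ← h2, h]
  have hNRsum : ∑ n ∈ NR, (n:ℚ)^p
      = ∑ r ∈ Finset.range A, ∑ j ∈ Finset.range (f r), ((r + A * j : ℕ):ℚ)^p := by
    rw [← Finset.sum_sigma (Finset.range A) (fun r => Finset.range (f r))
      (fun x => ((x.1 + A * x.2 : ℕ):ℚ)^p)]
    apply Finset.sum_nbij' (fun n => (⟨n % A, n / A⟩ : Σ _ : ℕ, ℕ))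
      (fun x => x.1 + A * x.2)
    · intro n hn
      rw [hNRiff] at hn
      rw [Finset.mem_sigma]
      refine ⟨Finset.mem_range.mpr (Nat.mod_lt n hA0), Finset.mem_range.mpr ?_⟩
      have h1 := ht_eq (n % A) (Nat.mod_lt n hA0)
      have h2 := Nat.div_add_mod n A
      have h3 : n < n % A + A * f (n % A) := by rw [← h1]; exact hn.2
      have h4 : A * (n / A) + n % A < A * f (n % A) + n % A := by
        rw [h2]
        rw [add_comm (A * f (n % A)) (n % A)]
        exact h3
      exact lt_of_mul_lt_mul_left (lt_of_add_lt_add_right h4) (Nat.zero_le A)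
    · rintro ⟨r, j⟩ hx
      rw [Finset.mem_sigma, Finset.mem_range, Finset.mem_range] at hx
      obtain ⟨hr, hj⟩ := hx
      rw [hNRiff]
      have hr0 : 0 < r := by
        rcases Nat.eq_zero_or_pos r with rfl | h
        · rw [hf0] at hj; omega
        · exact h
      have hmod : (r + A * j) % A = r := by
        rw [Nat.add_mul_mod_self_left, Nat.mod_eq_of_lt hr]
      refine ⟨lt_of_lt_of_le hr0 (Nat.le_add_right _ _), ?_⟩
      rw [hmod, ht_eq r hr]
      exact Nat.add_lt_add_left (mul_lt_mul_of_pos_left hj hA0) r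
    · intro n _; exact Nat.mod_add_div n A
    · rintro ⟨r, j⟩ hx
      rw [Finset.mem_sigma, Finset.mem_range, Finset.mem_range] at hx
      obtain ⟨hr, hj⟩ := hx
      have h1 : (r + A * j) % A = r := by
        rw [Nat.add_mul_mod_self_left, Nat.mod_eq_of_lt hr]
      have h2 : (r + A * j) / A = j := by
        rw [Nat.add_mul_div_left _ _ hA0, Nat.div_eq_of_lt hr, zero_add]
      simp [h1, h2]
    · intro n _; rw [Nat.mod_add_div n A]
  have hterm : ∀ r ∈ Finset.range A,
      ((p+1 : ℕ):ℚ) * ∑ j ∈ Finset.range (f r), ((r + A*j : ℕ):ℚ)^p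
      = (A:ℚ)^p * ((Polynomial.bernoulli (p+1)).eval ((t r:ℚ)/A)
          - (Polynomial.bernoulli (p+1)).eval ((r:ℚ)/A)) := by
    intro r hr
    have key : ∀ j : ℕ, ((r + A*j : ℕ):ℚ)^p = (A:ℚ)^p * ((r:ℚ)/A + j)^p := by
      intro j
      rw [← mul_pow]
      congr 1
      push_cast
      field_simp
    rw [Finset.sum_congr rfl (fun j _ => key j), ← Finset.mul_sum]
    have hcast : ((p+1 : ℕ):ℚ) = (p:ℚ) + 1 := by push_cast; ring
    rw [hcast, ← mul_assoc, mul_comm ((p:ℚ)+1) ((A:ℚ)^p), mul_assoc,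
      bernoulli_telescope p ((r:ℚ)/A) (f r)]
    congr 2
    rw [ht_eq r (Finset.mem_range.mp hr)]
    push_cast
    field_simp
  have hraabe : (A:ℚ)^p * ∑ r ∈ Finset.range A, (Polynomial.bernoulli (p+1)).eval ((r:ℚ)/A)
      = bernoulli (p+1) := by
    have h := raabe_eval A hA0 (p+1)
    rw [pow_succ, mul_comm ((A:ℚ)^p) (A:ℚ), mul_assoc] at h
    exact mul_left_cancel₀ hAQ h
  simp only [Nat.add_sub_cancel]
  rw [hN0sum, hNRsum, Finset.mul_sum, Finset.sum_congr rfl hterm]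
  rw [← hraabe]
  rw [Finset.mul_sum, Finset.mul_sum, ← Finset.sum_sub_distrib]
  exact Finset.sum_congr rfl fun r _ => by ring
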